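/- Let W = {w₁, w₂, w₃, …} = ℕ₊ with all subsets measurable, and let ν be the nonstandard probability measure defined by ν(w_j) = a_j + b_j ε with a_j = 1/2^j, b_{2j−1} = 1/2^{j−1}, b_{2j} = −1/2^{j−1} for j ≥ 1, where ε is a fixed positive infinitesimal (and ν(U) = Σ_{w_j∈U} a_j + ε Σ_{w_j∈U} b_j). Then there is no lexicographic probability system μ⃗ over (W, 2^W) that is expectation-equivalent to ν. -/

import Mathlib

/-- Lexicographic comparison of real tuples indexed by a linear order. -/
def lexLe {I : Type*} [LinearOrder I] (x y : I → ℝ) : Prop :=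
  x = y ∨ ∃ i, (∀ j, j < i → x j = y j) ∧ x i < y i

section auxlemmas

lemma lexLe_aux_antisymm {I : Type*} [LinearOrder I] {x y : I → ℝ}
    (h1 : (x = y ∨ ∃ i, (∀ j, j < i → x j = y j) ∧ x i < y i))
    (h2 : (y = x ∨ ∃ i, (∀ j, j < i → y j = x j) ∧ y i < x i)) : x = y := by
  rcases h1 with h | ⟨i, hpre, hlt⟩
  · exact h
  rcases h2 with h | ⟨i', hpre', hlt'⟩
  · exact h.symm
  rcases lt_trichotomy i i' with h | h | h
  · have := hpre' i h; exact absurd hlt (by rw [this]; exact lt_irrefl _)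
  · subst h; exact absurd (hlt.trans hlt') (lt_irrefl _)
  · have := hpre i' h; exact absurd hlt' (by rw [this]; exact lt_irrefl _)

variable {a b : ℕ+ → ℝ}

lemma auxA_summable (ha : ∀ j : ℕ+, a j = 1 / 2 ^ (j : ℕ)) : Summable a := by
  rw [← Equiv.pnatEquivNat.symm.summable_iff]
  have : (a ∘ ⇑Equiv.pnatEquivNat.symm) = fun n : ℕ => (1/2 : ℝ) * (1/2)^n := by
    funext n
    simp [Function.comp, ha, Equiv.pnatEquivNat, pow_succ, one_div, mul_comm]
  rw [this]
  exact (summable_geometric_of_lt_one (by norm_num) (by norm_num)).mul_left _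

lemma auxA_univ (ha : ∀ j : ℕ+, a j = 1 / 2 ^ (j : ℕ)) : ∑' j : ℕ+, a j = 1 := by
  rw [← Equiv.pnatEquivNat.symm.tsum_eq]
  have : (fun n : ℕ => a (Equiv.pnatEquivNat.symm n)) = fun n : ℕ => (1/2 : ℝ) * (1/2)^n := by
    funext n
    simp [Function.comp, ha, Equiv.pnatEquivNat, pow_succ, one_div, mul_comm]
  rw [this, tsum_mul_left, tsum_geometric_of_lt_one (by norm_num) (by norm_num)]
  norm_num

lemma auxB_even (hb : ∀ j : ℕ+, b (2 * j - 1) = 1 / 2 ^ ((j : ℕ) - 1) ∧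
    b (2 * j) = -(1 / 2 ^ ((j : ℕ) - 1))) (m : ℕ) :
    b (Nat.succPNat (2 * m)) = (1/2 : ℝ)^m ∧ b (Nat.succPNat (2 * m + 1)) = -((1/2 : ℝ)^m) := by
  have h1 : Nat.succPNat (2 * m) = 2 * Nat.succPNat m - 1 := by
    apply PNat.coe_injective
    have : (1:ℕ+) < 2 * Nat.succPNat m := by
      rw [← PNat.coe_lt_coe]
      simp [PNat.mul_coe, Nat.succPNat_coe]; omega
    rw [PNat.sub_coe, if_pos this]
    simp [PNat.mul_coe, Nat.succPNat_coe]
    omega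
  have h2 : Nat.succPNat (2 * m + 1) = 2 * Nat.succPNat m := by
    apply PNat.coe_injective
    simp [PNat.mul_coe, Nat.succPNat_coe]
    omega
  have hc : ((Nat.succPNat m : ℕ) - 1) = m := by simp [Nat.succPNat]
  constructor
  · rw [h1, (hb (Nat.succPNat m)).1, hc]; simp [one_div_pow]
  · rw [h2, (hb (Nat.succPNat m)).2, hc, one_div_pow]

lemma auxB_summable (hb : ∀ j : ℕ+, b (2 * j - 1) = 1 / 2 ^ ((j : ℕ) - 1) ∧
    b (2 * j) = -(1 / 2 ^ ((j : ℕ) - 1))) : Summable b := by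
  rw [← Equiv.pnatEquivNat.symm.summable_iff]
  have he : Summable (fun m : ℕ => (b ∘ ⇑Equiv.pnatEquivNat.symm) (2 * m)) := by
    have : (fun m : ℕ => (b ∘ ⇑Equiv.pnatEquivNat.symm) (2 * m)) = fun m : ℕ => (1/2 : ℝ)^m := by
      funext m; exact (auxB_even hb m).1
    rw [this]; exact summable_geometric_of_lt_one (by norm_num) (by norm_num)
  have ho : Summable (fun m : ℕ => (b ∘ ⇑Equiv.pnatEquivNat.symm) (2 * m + 1)) := by
    have : (fun m : ℕ => (b ∘ ⇑Equiv.pnatEquivNat.symm) (2 * m + 1)) = fun m : ℕ => -((1/2 : ℝ)^m) := by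
      funext m; exact (auxB_even hb m).2
    rw [this]; exact (summable_geometric_of_lt_one (by norm_num) (by norm_num)).neg
  exact he.even_add_odd ho

lemma auxB_univ (hb : ∀ j : ℕ+, b (2 * j - 1) = 1 / 2 ^ ((j : ℕ) - 1) ∧
    b (2 * j) = -(1 / 2 ^ ((j : ℕ) - 1))) : ∑' j : ℕ+, b j = 0 := by
  rw [← Equiv.pnatEquivNat.symm.tsum_eq]
  set g := fun n : ℕ => b (Equiv.pnatEquivNat.symm n) with hg
  have hge : (fun m : ℕ => g (2 * m)) = fun m : ℕ => (1/2 : ℝ)^m := by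
    funext m; exact (auxB_even hb m).1
  have hgo : (fun m : ℕ => g (2 * m + 1)) = fun m : ℕ => -((1/2 : ℝ)^m) := by
    funext m; exact (auxB_even hb m).2
  have he : Summable (fun m : ℕ => g (2 * m)) := by
    rw [hge]; exact summable_geometric_of_lt_one (by norm_num) (by norm_num)
  have ho : Summable (fun m : ℕ => g (2 * m + 1)) := by
    rw [hgo]; exact (summable_geometric_of_lt_one (by norm_num) (by norm_num)).neg
  have := tsum_even_add_odd he ho
  rw [hge, hgo] at this
  rw [← this, tsum_neg]
  ring

end auxlemmas

set_option maxHeartbeats 1000000 in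
/-- Let `W = {w₁, w₂, …} = ℕ₊` with all subsets measurable, and let `ν` be the nonstandard
probability measure with `ν(w_j) = a_j + b_j ε`, `a_j = 1/2^j`, `b_{2j-1} = 1/2^{j-1}`,
`b_{2j} = -1/2^{j-1}`, `ε` a positive infinitesimal, and
`ν(U) = Σ_{w_j ∈ U} a_j + ε Σ_{w_j ∈ U} b_j`.  Then there is no lexicographic probability
system `μ⃗` over `(W, 2^W)` that is expectation-equivalent to `ν`. -/
theorem stmt15 {K : Type*} [Field K] [LinearOrder K] [IsStrictOrderedRing K] (ι : ℝ →+* K) (hι : Monotone ι)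
    (ε : K) (hε : 0 < ε) (hinf : ∀ r : ℝ, 0 < r → ε < ι r)
    (a b : ℕ+ → ℝ)
    (ha : ∀ j : ℕ+, a j = 1 / 2 ^ (j : ℕ))
    (hb : ∀ j : ℕ+, b (2 * j - 1) = 1 / 2 ^ ((j : ℕ) - 1) ∧
                    b (2 * j) = -(1 / 2 ^ ((j : ℕ) - 1)))
    (ν : Set ℕ+ → K)
    (hν : ∀ U : Set ℕ+, ν U = ι (∑' j : U, a j.1) + ε * ι (∑' j : U, b j.1)) :
    ¬ ∃ (α : Ordinal) (μ : {β : Ordinal // β < α} → Set ℕ+ → ℝ),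
      (∀ i, (∀ U : Set ℕ+, 0 ≤ μ i U) ∧ μ i Set.univ = 1 ∧
        ∀ U V : Set ℕ+, Disjoint U V → μ i (U ∪ V) = μ i U + μ i V) ∧
      (∀ X Y : ℕ+ → ℝ, ∀ s : Finset ℝ, Set.range X ⊆ ↑s → Set.range Y ⊆ ↑s →
        ((∑ x ∈ s, ι x * ν (X ⁻¹' {x})) ≤ (∑ x ∈ s, ι x * ν (Y ⁻¹' {x})) ↔
          lexLe (fun i => ∑ x ∈ s, x * μ i (X ⁻¹' {x}))
                (fun i => ∑ x ∈ s, x * μ i (Y ⁻¹' {x})))) := by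
  rintro ⟨α, μ, hμ, hmatch⟩
  have hstrict : StrictMono ι := hι.strictMono_of_injective ι.injective
  -- basic real-coefficient facts
  have haf : ∀ j : ℕ+, a j = (1/2 : ℝ)^(j:ℕ) := fun j => by rw [ha j, one_div_pow]
  have hb1 : b 1 = 1 := by
    have h := (hb 1).1
    have h21 : (2 * 1 - 1 : ℕ+) = 1 := by decide
    rw [h21] at h
    simpa using h
  -- tsum values
  have hAU₀ : (∑' j : ({1} : Set ℕ+), a j.1) = 1/2 := by
    rw [tsum_singleton]
    rw [ha 1]; norm_num
  have hBU₀ : (∑' j : ({1} : Set ℕ+), b j.1) = 1 := by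
    rw [tsum_singleton, hb1]
  have hAV₀ : (∑' j : (({1} : Set ℕ+)ᶜ : Set ℕ+), a j.1) = 1/2 := by
    have h := Summable.tsum_add_tsum_compl (f := a) (s := ({1} : Set ℕ+))
      ((auxA_summable ha).subtype _) ((auxA_summable ha).subtype _)
    rw [tsum_singleton, ha 1, auxA_univ ha] at h
    norm_num at h
    linarith
  have hBV₀ : (∑' j : (({1} : Set ℕ+)ᶜ : Set ℕ+), b j.1) = -1 := by
    have h := Summable.tsum_add_tsum_compl (f := b) (s := ({1} : Set ℕ+))
      ((auxB_summable hb).subtype _) ((auxB_summable hb).subtype _)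
    rw [tsum_singleton, hb1, auxB_univ hb] at h
    linarith
  have hAE : ∀ n : ℕ+, (∑' j : (({2*n} : Set ℕ+)) , a j.1) = (1/2:ℝ)^(n:ℕ) * (1/2:ℝ)^(n:ℕ) := by
    intro n
    rw [tsum_singleton, haf]
    have hc : ((2*n : ℕ+) : ℕ) = (n:ℕ) + (n:ℕ) := by
      rw [PNat.mul_coe]; simp [two_mul]
    rw [hc, pow_add]
  have hBE : ∀ n : ℕ+, (∑' j : (({2*n} : Set ℕ+)), b j.1) = -(2 * (1/2:ℝ)^(n:ℕ)) := by
    intro n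
    rw [tsum_singleton, (hb n).2]
    obtain ⟨m, hm⟩ : ∃ m, (n:ℕ) = m + 1 := ⟨(n:ℕ) - 1, by have := n.pos; omega⟩
    rw [hm]
    simp [pow_succ, one_div_pow]
    ring
  have hνempty : ν (∅ : Set ℕ+) = 0 := by
    rw [hν]
    simp
  have hμempty : ∀ i, μ i (∅ : Set ℕ+) = 0 := by
    intro i
    have h := (hμ i).2.2 ∅ ∅ (by simp)
    simp at h
    linarith
  have hμsum1 : ∀ i, μ i ({1} : Set ℕ+) + μ i (({1} : Set ℕ+)ᶜ) = 1 := by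
    intro i
    have h := (hμ i).2.2 ({1} : Set ℕ+) (({1} : Set ℕ+)ᶜ) disjoint_compl_right
    rw [Set.union_compl_self, (hμ i).2.1] at h
    linarith
  -- ν values
  have hνU₀ : ν ({1} : Set ℕ+) = ι (1/2) + ε * ι 1 := by rw [hν, hAU₀, hBU₀]
  have hνV₀ : ν (({1} : Set ℕ+)ᶜ) = ι (1/2) + ε * ι (-1) := by rw [hν, hAV₀, hBV₀]
  have hνE : ∀ n : ℕ+, ν ({2*n} : Set ℕ+)
      = ι ((1/2:ℝ)^(n:ℕ) * (1/2:ℝ)^(n:ℕ)) + ε * ι (-(2 * (1/2:ℝ)^(n:ℕ))) := by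
    intro n; rw [hν, hAE, hBE]
  -- algebra helpers in K
  have hexp : ∀ c p q : ℝ, ι c * (ι p + ε * ι q) = ι (c*p) + ε * ι (c*q) := by
    intro c p q; rw [map_mul, map_mul]; ring
  have hform : ∀ u v u' v' : ℝ, u = u' → v = v' → ι u + ε * ι v = ι u' + ε * ι v' := by
    intro u v u' v' h1 h2; rw [h1, h2]
  -- indicator comparison of {1} vs its complement
  set Xi : ℕ+ → ℝ := fun j => if j = 1 then 0 else 1 with hXidef
  set Yi : ℕ+ → ℝ := fun j => if j = 1 then 1 else 0 with hYidef
  have hXi1 : Xi ⁻¹' {1} = (({1} : Set ℕ+)ᶜ) := by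
    ext j
    simp only [hXidef, Set.mem_preimage, Set.mem_singleton_iff, Set.mem_compl_iff]
    by_cases h1 : j = 1 <;> simp [h1]
  have hXi0 : Xi ⁻¹' {0} = ({1} : Set ℕ+) := by
    ext j
    simp only [hXidef, Set.mem_preimage, Set.mem_singleton_iff]
    by_cases h1 : j = 1 <;> simp [h1]
  have hYi1 : Yi ⁻¹' {1} = ({1} : Set ℕ+) := by
    ext j
    simp only [hYidef, Set.mem_preimage, Set.mem_singleton_iff]
    by_cases h1 : j = 1 <;> simp [h1]
  have hYi0 : Yi ⁻¹' {0} = (({1} : Set ℕ+)ᶜ) := by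
    ext j
    simp only [hYidef, Set.mem_preimage, Set.mem_singleton_iff, Set.mem_compl_iff]
    by_cases h1 : j = 1 <;> simp [h1]
  have hrXi : Set.range Xi ⊆ ↑({0, 1} : Finset ℝ) := by
    rintro x ⟨j, rfl⟩
    simp only [hXidef]
    split_ifs <;> simp
  have hrYi : Set.range Yi ⊆ ↑({0, 1} : Finset ℝ) := by
    rintro x ⟨j, rfl⟩
    simp only [hYidef]
    split_ifs <;> simp
  have h01 : (0:ℝ) ∉ ({1} : Finset ℝ) := by norm_num
  have hSXi : (∑ x ∈ ({0,1} : Finset ℝ), ι x * ν (Xi ⁻¹' {x})) = ν (({1} : Set ℕ+)ᶜ) := by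
    rw [Finset.sum_insert h01, Finset.sum_singleton, hXi1, map_zero, zero_mul, map_one, one_mul,
      zero_add]
  have hSYi : (∑ x ∈ ({0,1} : Finset ℝ), ι x * ν (Yi ⁻¹' {x})) = ν ({1} : Set ℕ+) := by
    rw [Finset.sum_insert h01, Finset.sum_singleton, hYi1, map_zero, zero_mul, map_one, one_mul,
      zero_add]
  have hMXi : (fun i => ∑ x ∈ ({0,1} : Finset ℝ), x * μ i (Xi ⁻¹' {x}))
      = fun i => μ i (({1} : Set ℕ+)ᶜ) := by
    funext i
    rw [Finset.sum_insert h01, Finset.sum_singleton, hXi1, zero_mul, one_mul, zero_add]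
  have hMYi : (fun i => ∑ x ∈ ({0,1} : Finset ℝ), x * μ i (Yi ⁻¹' {x}))
      = fun i => μ i ({1} : Set ℕ+) := by
    funext i
    rw [Finset.sum_insert h01, Finset.sum_singleton, hYi1, zero_mul, one_mul, zero_add]
  have hνlt : ν (({1} : Set ℕ+)ᶜ) < ν ({1} : Set ℕ+) := by
    rw [hνU₀, hνV₀]
    have : ι (-1) < ι 1 := hstrict (by norm_num)
    have := mul_lt_mul_of_pos_left this hε
    linarith
  have hiffVU := hmatch Xi Yi ({0,1} : Finset ℝ) hrXi hrYi
  rw [hSXi, hSYi, hMXi, hMYi] at hiffVU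
  have hiffUV := hmatch Yi Xi ({0,1} : Finset ℝ) hrYi hrXi
  rw [hSXi, hSYi, hMXi, hMYi] at hiffUV
  have HlexVU : lexLe (fun i => μ i (({1} : Set ℕ+)ᶜ)) (fun i => μ i ({1} : Set ℕ+)) :=
    hiffVU.mp (le_of_lt hνlt)
  -- the per-n equality
  have main : ∀ n : ℕ+, ∀ i, (1/2:ℝ)^(n:ℕ) * μ i ({1} : Set ℕ+) + μ i ({2*n} : Set ℕ+)
      = (1/2:ℝ)^(n:ℕ) * (1/2:ℝ)^(n:ℕ) * μ i ({1} : Set ℕ+)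
        + ((1/2:ℝ)^(n:ℕ) * (1/2:ℝ)^(n:ℕ) + (1/2:ℝ)^(n:ℕ)) * μ i (({1} : Set ℕ+)ᶜ) := by
    intro n
    set t : ℝ := (1/2:ℝ)^(n:ℕ) with htdef
    have htpos : 0 < t := by positivity
    have htle : t ≤ 1/2 := by
      rw [htdef]
      calc (1/2:ℝ)^(n:ℕ) ≤ (1/2:ℝ)^(1:ℕ) := by
            apply pow_le_pow_of_le_one (by norm_num) (by norm_num) n.one_le
        _ = 1/2 := by norm_num
    have h2n1 : (2*n : ℕ+) ≠ 1 := by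
      intro h
      have := congrArg (fun x : ℕ+ => (x : ℕ)) h
      simp [PNat.mul_coe] at this
    set X : ℕ+ → ℝ := fun j => if j = 1 then t else if j = 2*n then 1 else 0 with hXdef
    set Y : ℕ+ → ℝ := fun j => if j = 1 then t*t else t*t + t with hYdef
    set s : Finset ℝ := {0, t*t, t, t*t+t, 1} with hsdef
    have hmem0 : (0:ℝ) ∉ ({t*t, t, t*t+t, 1} : Finset ℝ) := by
      simp only [Finset.mem_insert, Finset.mem_singleton]
      push_neg
      refine ⟨by nlinarith, by nlinarith, by nlinarith, by nlinarith⟩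
    have hmem1 : (t*t : ℝ) ∉ ({t, t*t+t, 1} : Finset ℝ) := by
      simp only [Finset.mem_insert, Finset.mem_singleton]
      push_neg
      refine ⟨by nlinarith, by nlinarith, by nlinarith⟩
    have hmem2 : (t : ℝ) ∉ ({t*t+t, 1} : Finset ℝ) := by
      simp only [Finset.mem_insert, Finset.mem_singleton]
      push_neg
      refine ⟨by nlinarith, by nlinarith⟩
    have hmem3 : (t*t+t : ℝ) ∉ ({1} : Finset ℝ) := by
      simp only [Finset.mem_singleton]
      exact ne_of_lt (by nlinarith)
    have hsK : ∀ f : ℝ → K, (∑ x ∈ s, f x)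
        = f 0 + (f (t*t) + (f t + (f (t*t+t) + f 1))) := by
      intro f
      rw [hsdef, Finset.sum_insert hmem0, Finset.sum_insert hmem1, Finset.sum_insert hmem2,
        Finset.sum_insert hmem3, Finset.sum_singleton]
    have hsR : ∀ f : ℝ → ℝ, (∑ x ∈ s, f x)
        = f 0 + (f (t*t) + (f t + (f (t*t+t) + f 1))) := by
      intro f
      rw [hsdef, Finset.sum_insert hmem0, Finset.sum_insert hmem1, Finset.sum_insert hmem2,
        Finset.sum_insert hmem3, Finset.sum_singleton]
    -- preimages
    have hXt : X ⁻¹' {t} = ({1} : Set ℕ+) := by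
      ext j
      simp only [hXdef, Set.mem_preimage, Set.mem_singleton_iff]
      constructor
      · intro h
        by_contra h1
        by_cases h2 : j = 2*n
        · rw [if_neg h1, if_pos h2] at h; exact absurd h (by nlinarith)
        · rw [if_neg h1, if_neg h2] at h; exact absurd h (by nlinarith)
      · intro h; rw [if_pos h]
    have hX1 : X ⁻¹' {1} = ({2*n} : Set ℕ+) := by
      ext j
      simp only [hXdef, Set.mem_preimage, Set.mem_singleton_iff]
      constructor
      · intro h
        by_contra h2
        by_cases h1 : j = 1
        · rw [if_pos h1] at h; exact absurd h (by nlinarith)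
        · rw [if_neg h1, if_neg h2] at h; exact absurd h (by norm_num)
      · intro h
        have h1 : j ≠ 1 := by rw [h]; exact h2n1
        rw [if_neg h1, if_pos h]
    have hXtt : X ⁻¹' {t*t} = (∅ : Set ℕ+) := by
      ext j
      simp only [hXdef, Set.mem_preimage, Set.mem_singleton_iff, Set.mem_empty_iff_false,
        iff_false]
      intro h
      by_cases h1 : j = 1
      · rw [if_pos h1] at h; nlinarith
      · by_cases h2 : j = 2*n
        · rw [if_neg h1, if_pos h2] at h; nlinarith
        · rw [if_neg h1, if_neg h2] at h; nlinarith
    have hXttt : X ⁻¹' {t*t+t} = (∅ : Set ℕ+) := by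
      ext j
      simp only [hXdef, Set.mem_preimage, Set.mem_singleton_iff, Set.mem_empty_iff_false,
        iff_false]
      intro h
      by_cases h1 : j = 1
      · rw [if_pos h1] at h; nlinarith
      · by_cases h2 : j = 2*n
        · rw [if_neg h1, if_pos h2] at h; nlinarith
        · rw [if_neg h1, if_neg h2] at h; nlinarith
    have hYtt : Y ⁻¹' {t*t} = ({1} : Set ℕ+) := by
      ext j
      simp only [hYdef, Set.mem_preimage, Set.mem_singleton_iff]
      constructor
      · intro h
        by_contra h1
        rw [if_neg h1] at h; nlinarith
      · intro h; rw [if_pos h]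
    have hYttt : Y ⁻¹' {t*t+t} = (({1} : Set ℕ+)ᶜ) := by
      ext j
      simp only [hYdef, Set.mem_preimage, Set.mem_singleton_iff, Set.mem_compl_iff]
      constructor
      · intro h h1
        rw [if_pos h1] at h; nlinarith
      · intro h1; rw [if_neg h1]
    have hYt : Y ⁻¹' {t} = (∅ : Set ℕ+) := by
      ext j
      simp only [hYdef, Set.mem_preimage, Set.mem_singleton_iff, Set.mem_empty_iff_false,
        iff_false]
      intro h
      by_cases h1 : j = 1
      · rw [if_pos h1] at h; nlinarith
      · rw [if_neg h1] at h; nlinarith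
    have hY1 : Y ⁻¹' {1} = (∅ : Set ℕ+) := by
      ext j
      simp only [hYdef, Set.mem_preimage, Set.mem_singleton_iff, Set.mem_empty_iff_false,
        iff_false]
      intro h
      by_cases h1 : j = 1
      · rw [if_pos h1] at h; nlinarith
      · rw [if_neg h1] at h; nlinarith
    have hY0 : Y ⁻¹' {0} = (∅ : Set ℕ+) := by
      ext j
      simp only [hYdef, Set.mem_preimage, Set.mem_singleton_iff, Set.mem_empty_iff_false,
        iff_false]
      intro h
      by_cases h1 : j = 1
      · rw [if_pos h1] at h; nlinarith
      · rw [if_neg h1] at h; nlinarith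
    -- ranges
    have hrX : Set.range X ⊆ ↑s := by
      rintro x ⟨j, rfl⟩
      simp only [hXdef]
      split_ifs <;> simp [hsdef]
    have hrY : Set.range Y ⊆ ↑s := by
      rintro x ⟨j, rfl⟩
      simp only [hYdef]
      split_ifs <;> simp [hsdef]
    -- ν sums are equal
    have m1 : ι (t*(1/2)) + ι (1*(t*t)) = ι (t*t*(1/2)) + ι ((t*t+t)*(1/2)) := by
      rw [← map_add, ← map_add]; congr 1; ring
    have m2 : ι (t*1) + ι (1*(-(2*t))) = ι (t*t*1) + ι ((t*t+t)*(-1)) := by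
      rw [← map_add, ← map_add]; congr 1; ring
    have hννeq : (∑ x ∈ s, ι x * ν (X ⁻¹' {x})) = (∑ x ∈ s, ι x * ν (Y ⁻¹' {x})) := by
      rw [hsK, hsK, hXtt, hXt, hXttt, hX1, hYtt, hYt, hYttt, hY1, hY0, hνempty,
        hνU₀, hνV₀, hνE n, ← htdef]
      simp only [map_zero, zero_mul, mul_zero, zero_add, add_zero]
      rw [hexp, hexp, hexp, hexp]
      linear_combination m1 + ε * m2
    have hlex1 := (hmatch X Y s hrX hrY).mp (le_of_eq hννeq)
    have hlex2 := (hmatch Y X s hrY hrX).mp (le_of_eq hννeq.symm)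
    have hfun := lexLe_aux_antisymm hlex1 hlex2
    intro i
    have h := congrFun hfun i
    rw [hsR, hsR, hXtt, hXt, hXttt, hX1, hYtt, hYt, hYttt, hY1, hY0, hμempty i] at h
    nlinarith [h]
  -- transfinite induction: every level gives measure 1/2 to {1} and to its complement
  have key : ∀ (β : Ordinal), ∀ (hβ : β < α),
      μ ⟨β, hβ⟩ ({1} : Set ℕ+) = 1/2 ∧ μ ⟨β, hβ⟩ (({1} : Set ℕ+)ᶜ) = 1/2 := by
    intro β
    induction β using Ordinal.induction with
    | h β IH =>
      intro hβ
      set i : {γ : Ordinal // γ < α} := ⟨β, hβ⟩ with hidef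
      have hd0 : 0 ≤ μ i ({1} : Set ℕ+) - μ i (({1} : Set ℕ+)ᶜ) := by
        rcases HlexVU with heq | ⟨i₀, hpre, hlt⟩
        · have := congrFun heq i
          linarith [this.ge, this.le]
        · rcases lt_trichotomy i i₀ with h | h | h
          · have := hpre i h
            simp only at this
            linarith [this.le]
          · rw [h]
            linarith
          · have h1 := IH i₀.1 h i₀.2
            simp only [Subtype.coe_eta] at h1
            simp only at hlt
            rw [h1.1, h1.2] at hlt
            linarith
      have hdle : ∀ n : ℕ+, μ i ({1} : Set ℕ+) - μ i (({1} : Set ℕ+)ᶜ) ≤ (1/2:ℝ)^(n:ℕ) := by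
        intro n
        have h := main n i
        have hnn := (hμ i).1 ({2*n} : Set ℕ+)
        have hs1 := hμsum1 i
        nlinarith [pow_pos (by norm_num : (0:ℝ) < 1/2) (n:ℕ)]
      have hd : μ i ({1} : Set ℕ+) - μ i (({1} : Set ℕ+)ᶜ) = 0 := by
        by_contra hne
        have hdpos : 0 < μ i ({1} : Set ℕ+) - μ i (({1} : Set ℕ+)ᶜ) :=
          lt_of_le_of_ne hd0 (Ne.symm hne)
        obtain ⟨m, hm⟩ := exists_pow_lt_of_lt_one hdpos (by norm_num : (1/2:ℝ) < 1)
        have h1 := hdle m.succPNat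
        have hcoe : ((m.succPNat : ℕ+) : ℕ) = m + 1 := Nat.succPNat_coe m
        rw [hcoe] at h1
        have : ((1:ℝ)/2)^(m+1) ≤ (1/2:ℝ)^m :=
          pow_le_pow_of_le_one (by norm_num) (by norm_num) (by omega)
        linarith
      have hs1 := hμsum1 i
      constructor <;> [skip; skip] <;> linarith
  -- final contradiction
  have hlexfinal : lexLe (fun i => μ i ({1} : Set ℕ+)) (fun i => μ i (({1} : Set ℕ+)ᶜ)) := by
    left
    funext i
    have h := key i.1 i.2
    simp only [Subtype.coe_eta] at h
    rw [h.1, h.2]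
  have := hiffUV.mpr hlexfinal
  exact absurd this (not_le.mpr hνlt)
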